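/- Let J ⊆ ℝ be an interval, F : J → ℝ twice continuously differentiable, ω : J → ℝ continuous, and let x₁, x₂ : J → ℝ be twice differentiable positive functions each solving the dissipative Milne–Pinney equation ẍ = −F'(t)ẋ + ω²(t)x + e^{−2F(t)}x^{−3} on J. Let I denote the (constant) value of e^{2F(t)}(x₁ẋ₂ − x₂ẋ₁)² + (x₁/x₂)² + (x₂/x₁)² on J, and let k₁, k₂ ∈ ℝ be such that I² ≠ 4, set λ₁₂ = (k₁k₂I + k₁² + k₂² − 1)/(I² − 4), and assume that for all t ∈ J both λ₁₂(−(x₁⁴(t) + x₂⁴(t)) + I x₁²(t)x₂²(t)) > 0 and k₁x₁²(t) + k₂x₂²(t) + 2√(λ₁₂(−(x₁⁴(t)+x₂⁴(t)) + I x₁²(t)x₂²(t))) > 0. Then x(t) := √(k₁x₁²(t) + k₂x₂²(t) + 2√(λ₁₂(−(x₁⁴(t)+x₂⁴(t)) + I x₁²(t)x₂²(t)))) is twice differentiable and also solves ẍ = −F'(t)ẋ + ω²(t)x + e^{−2F(t)}x^{−3} on J. (This is the common time-dependent superposition rule for the Lie family of dissipative Milne–Pinney equations.) -/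

import Mathlib

set_option maxHeartbeats 1600000 in
private lemma mp_key (a va b vb S q E f w lam k1 k2 Ii UD UDD : ℝ)
    (hS2 : S^2 = lam * (-(a^4+b^4) + Ii*a^2*b^2))
    (hW : (a*vb - b*va)^2*a^2*b^2 = E*(-(a^4+b^4) + Ii*a^2*b^2))
    (h3 : lam*(Ii^2-4) = k1*k2*Ii + k1^2 + k2^2 - 1)
    (h4 : q^2 = k1*a^2 + k2*b^2 + 2*S)
    (hUD : UD*S = ((2:ℝ)*b*vb*S*k2 + (-4:ℝ)*b^3*vb*lam + (2:ℝ)*a*va*S*k1 + (2:ℝ)*a*va*b^2*lam*Ii + (2:ℝ)*a^2*b*vb*lam*Ii + (-4:ℝ)*a^3*va*lam))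
    (hUDD : UDD*(S^3*a^3*b^3) = ((2:ℝ)*a*b^3*S^3*E*k1 + (2:ℝ)*a*b^5*S^2*E*lam*Ii + (2:ℝ)*a^3*b*S^3*E*k2 + (-8:ℝ)*a^3*b^3*S^2*E*lam + (2:ℝ)*a^3*b^3*vb^2*S^3*k2 + (-2:ℝ)*a^3*b^4*vb*S^3*f*k2 + (2:ℝ)*a^3*b^5*S^3*w^2*k2 + (-12:ℝ)*a^3*b^5*vb^2*S^2*lam + (4:ℝ)*a^3*b^6*vb*S^2*f*lam + (-4:ℝ)*a^3*b^7*S^2*w^2*lam + (-8:ℝ)*a^3*b^9*vb^2*lam^2 + (2:ℝ)*a^3*va^2*b^3*S^3*k1 + (2:ℝ)*a^3*va^2*b^5*S^2*lam*Ii + (-2:ℝ)*a^4*va*b^3*S^3*f*k1 + (8:ℝ)*a^4*va*b^4*vb*S^2*lam*Ii + (-2:ℝ)*a^4*va*b^5*S^2*f*lam*Ii + (8:ℝ)*a^4*va*b^8*vb*lam^2*Ii + (2:ℝ)*a^5*b*S^2*E*lam*Ii + (2:ℝ)*a^5*b^3*S^3*w^2*k1 + (2:ℝ)*a^5*b^3*vb^2*S^2*lam*Ii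 + (-2:ℝ)*a^5*b^4*vb*S^2*f*lam*Ii + (4:ℝ)*a^5*b^5*S^2*w^2*lam*Ii + (8:ℝ)*a^5*b^7*vb^2*lam^2*Ii + (-12:ℝ)*a^5*va^2*b^3*S^2*lam + (-2:ℝ)*a^5*va^2*b^7*lam^2*Ii^2 + (4:ℝ)*a^6*va*b^3*S^2*f*lam + (-16:ℝ)*a^6*va*b^6*vb*lam^2 + (-4:ℝ)*a^6*va*b^6*vb*lam^2*Ii^2 + (-4:ℝ)*a^7*b^3*S^2*w^2*lam + (-2:ℝ)*a^7*b^5*vb^2*lam^2*Ii^2 + (8:ℝ)*a^7*va^2*b^5*lam^2*Ii + (8:ℝ)*a^8*va*b^4*vb*lam^2*Ii + (-8:ℝ)*a^9*va^2*b^3*lam^2))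
    (hA : Ii^2 - 4 ≠ 0) (hR : (-(a^4+b^4) + Ii*a^2*b^2) ≠ 0)
    (hS : S ≠ 0) (ha : a ≠ 0) (hb : b ≠ 0) :
    2*q^2*UDD - UD^2 + 2*f*q^2*UD - 4*w^2*q^4 - 4*E = 0 := by
  have hM : (S^3*a^3*b^3*((Ii^2-4)^2*(-(a^4+b^4)+Ii*a^2*b^2))) ≠ 0 := by
    exact mul_ne_zero (mul_ne_zero (mul_ne_zero (pow_ne_zero _ hS) (pow_ne_zero _ ha)) (pow_ne_zero _ hb)) (mul_ne_zero (pow_ne_zero _ hA) hR)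
  have key : (2*q^2*UDD - UD^2 + 2*f*q^2*UD - 4*w^2*q^4 - 4*E) * (S^3*a^3*b^3*((Ii^2-4)^2*(-(a^4+b^4)+Ii*a^2*b^2))) = 0 := by
    linear_combination (2*q^2*((Ii^2-4)^2*(-(a^4+b^4)+Ii*a^2*b^2))) * hUDD + (S*a^3*b^3*((Ii^2-4)^2*(-(a^4+b^4)+Ii*a^2*b^2))*(2*f*q^2*S - (UD*S + ((2:ℝ)*b*vb*S*k2 + (-4:ℝ)*b^3*vb*lam + (2:ℝ)*a*va*S*k1 + (2:ℝ)*a*va*b^2*lam*Ii + (2:ℝ)*a^2*b*vb*lam*Ii + (-4:ℝ)*a^3*va*lam)))) * hUD + (((8:ℝ)*a*b^3*S^2*E*k1 + (4:ℝ)*a*b^5*S*E*k1*k2 + (8:ℝ)*a*b^5*S*E*lam*Ii + (4:ℝ)*a*b^7*E*lam*k2*Ii + (-8:ℝ)*a*b^7*E*lam*k1 + (8:ℝ)*a^3*b*S^2*E*k2 + (-4:ℝ)*a^3*b^3*S*E + (4:ℝ)*a^3*b^3*S*E*k2^2 + (4:ℝ)*a^3*b^3*S*E*k1^2 + (-32:ℝ)*a^3*b^3*S*E*lam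 + (-16:ℝ)*a^3*b^3*S^3*w^2 + (8:ℝ)*a^3*b^3*vb^2*S^2*k2 + (-24:ℝ)*a^3*b^5*E*lam*k2 + (12:ℝ)*a^3*b^5*E*lam*k1*Ii + (-8:ℝ)*a^3*b^5*S^2*w^2*k2 + (-48:ℝ)*a^3*b^5*vb^2*S*lam + (-16:ℝ)*a^3*b^7*vb^2*lam*k2 + (8:ℝ)*a^3*va^2*b^3*S^2*k1 + (4:ℝ)*a^3*va^2*b^5*S*k1*k2 + (8:ℝ)*a^3*va^2*b^5*S*lam*Ii + (4:ℝ)*a^3*va^2*b^7*lam*k2*Ii + (-8:ℝ)*a^3*va^2*b^7*lam*k1 + (-8:ℝ)*a^4*va*b^4*vb*S*k1*k2 + (32:ℝ)*a^4*va*b^4*vb*S*lam*Ii + (8:ℝ)*a^4*va*b^6*vb*lam*k2*Ii + (16:ℝ)*a^4*va*b^6*vb*lam*k1 + (4:ℝ)*a^5*b*S*E*k1*k2 + (8:ℝ)*a^5*b*S*E*lam*Ii + (12:ℝ)*a^5*b^3*E*lam*k2*Ii + (-24:ℝ)*a^5*b^3*E*lam*k1 + (-8:ℝ)*a^5*b^3*S^2*w^2*k1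 + (4:ℝ)*a^5*b^3*vb^2*S*k1*k2 + (8:ℝ)*a^5*b^3*vb^2*S*lam*Ii + (4:ℝ)*a^5*b^5*vb^2*lam*k2*Ii + (-24:ℝ)*a^5*b^5*vb^2*lam*k1 + (-48:ℝ)*a^5*va^2*b^3*S*lam + (-24:ℝ)*a^5*va^2*b^5*lam*k2 + (4:ℝ)*a^5*va^2*b^5*lam*k1*Ii + (16:ℝ)*a^6*va*b^4*vb*lam*k2 + (8:ℝ)*a^6*va*b^4*vb*lam*k1*Ii + (-8:ℝ)*a^7*b*E*lam*k2 + (4:ℝ)*a^7*b*E*lam*k1*Ii + (-8:ℝ)*a^7*b^3*vb^2*lam*k2 + (4:ℝ)*a^7*b^3*vb^2*lam*k1*Ii + (-16:ℝ)*a^7*va^2*b^3*lam*k1)*((Ii^2-4)^2*(-(a^4+b^4)+Ii*a^2*b^2))) * hS2 + ((8:ℝ)*a*b^9*S*Ii + (-16:ℝ)*a*b^9*S*k2^2*Ii + (8:ℝ)*a*b^9*S*k2^4*Ii + (16:ℝ)*a*b^9*S*k1*k2 + (-20:ℝ)*a*b^9*S*k1*k2*Ii^2 + (-16:ℝ)*a*b^9*S*k1*k2^3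 + (20:ℝ)*a*b^9*S*k1*k2^3*Ii^2 + (-16:ℝ)*a*b^9*S*k1^2*Ii + (12:ℝ)*a*b^9*S*k1^2*k2^2*Ii^3 + (-16:ℝ)*a*b^9*S*k1^3*k2 + (20:ℝ)*a*b^9*S*k1^3*k2*Ii^2 + (8:ℝ)*a*b^9*S*k1^4*Ii + (4:ℝ)*a*b^11*k2*Ii + (-8:ℝ)*a*b^11*k2^3*Ii + (4:ℝ)*a*b^11*k2^5*Ii + (-8:ℝ)*a*b^11*k1 + (16:ℝ)*a*b^11*k1*k2^2 + (-8:ℝ)*a*b^11*k1*k2^2*Ii^2 + (-8:ℝ)*a*b^11*k1*k2^4 + (8:ℝ)*a*b^11*k1*k2^4*Ii^2 + (8:ℝ)*a*b^11*k1^2*k2*Ii + (-8:ℝ)*a*b^11*k1^2*k2^3*Ii + (4:ℝ)*a*b^11*k1^2*k2^3*Ii^3 + (16:ℝ)*a*b^11*k1^3 + (-16:ℝ)*a*b^11*k1^3*k2^2 + (-12:ℝ)*a*b^11*k1^4*k2*Ii + (-8:ℝ)*a*b^11*k1^5 + (-48:ℝ)*a^3*b^7*S + (-4:ℝ)*a^3*b^7*S*Ii^2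 + (96:ℝ)*a^3*b^7*S*k2^2 + (8:ℝ)*a^3*b^7*S*k2^2*Ii^2 + (-48:ℝ)*a^3*b^7*S*k2^4 + (-4:ℝ)*a^3*b^7*S*k2^4*Ii^2 + (64:ℝ)*a^3*b^7*S*k1*k2*Ii + (16:ℝ)*a^3*b^7*S*k1*k2*Ii^3 + (-64:ℝ)*a^3*b^7*S*k1*k2^3*Ii + (-16:ℝ)*a^3*b^7*S*k1*k2^3*Ii^3 + (96:ℝ)*a^3*b^7*S*k1^2 + (8:ℝ)*a^3*b^7*S*k1^2*Ii^2 + (-96:ℝ)*a^3*b^7*S*k1^2*k2^2 + (-24:ℝ)*a^3*b^7*S*k1^2*k2^2*Ii^2 + (-12:ℝ)*a^3*b^7*S*k1^2*k2^2*Ii^4 + (-64:ℝ)*a^3*b^7*S*k1^3*k2*Ii + (-16:ℝ)*a^3*b^7*S*k1^3*k2*Ii^3 + (-48:ℝ)*a^3*b^7*S*k1^4 + (-4:ℝ)*a^3*b^7*S*k1^4*Ii^2 + (-24:ℝ)*a^3*b^9*k2 + (-4:ℝ)*a^3*b^9*k2*Ii^2 + (48:ℝ)*a^3*b^9*k2^3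 + (8:ℝ)*a^3*b^9*k2^3*Ii^2 + (-24:ℝ)*a^3*b^9*k2^5 + (-4:ℝ)*a^3*b^9*k2^5*Ii^2 + (20:ℝ)*a^3*b^9*k1*Ii + (8:ℝ)*a^3*b^9*k1*k2^2*Ii + (8:ℝ)*a^3*b^9*k1*k2^2*Ii^3 + (-28:ℝ)*a^3*b^9*k1*k2^4*Ii + (-8:ℝ)*a^3*b^9*k1*k2^4*Ii^3 + (48:ℝ)*a^3*b^9*k1^2*k2 + (-32:ℝ)*a^3*b^9*k1^2*k2*Ii^2 + (-48:ℝ)*a^3*b^9*k1^2*k2^3 + (8:ℝ)*a^3*b^9*k1^2*k2^3*Ii^2 + (-4:ℝ)*a^3*b^9*k1^2*k2^3*Ii^4 + (-40:ℝ)*a^3*b^9*k1^3*Ii + (-8:ℝ)*a^3*b^9*k1^3*k2^2*Ii + (12:ℝ)*a^3*b^9*k1^3*k2^2*Ii^3 + (-24:ℝ)*a^3*b^9*k1^4*k2 + (36:ℝ)*a^3*b^9*k1^4*k2*Ii^2 + (20:ℝ)*a^3*b^9*k1^5*Ii + (64:ℝ)*a^5*b^5*S*Ii + (-4:ℝ)*a^5*b^5*S*Ii^3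 + (-128:ℝ)*a^5*b^5*S*k2^2*Ii + (8:ℝ)*a^5*b^5*S*k2^2*Ii^3 + (64:ℝ)*a^5*b^5*S*k2^4*Ii + (-4:ℝ)*a^5*b^5*S*k2^4*Ii^3 + (32:ℝ)*a^5*b^5*S*k1*k2 + (-120:ℝ)*a^5*b^5*S*k1*k2*Ii^2 + (4:ℝ)*a^5*b^5*S*k1*k2*Ii^4 + (-32:ℝ)*a^5*b^5*S*k1*k2^3 + (120:ℝ)*a^5*b^5*S*k1*k2^3*Ii^2 + (-4:ℝ)*a^5*b^5*S*k1*k2^3*Ii^4 + (-128:ℝ)*a^5*b^5*S*k1^2*Ii + (8:ℝ)*a^5*b^5*S*k1^2*Ii^3 + (96:ℝ)*a^5*b^5*S*k1^2*k2^2*Ii + (48:ℝ)*a^5*b^5*S*k1^2*k2^2*Ii^3 + (-32:ℝ)*a^5*b^5*S*k1^3*k2 + (120:ℝ)*a^5*b^5*S*k1^3*k2*Ii^2 + (-4:ℝ)*a^5*b^5*S*k1^3*k2*Ii^4 + (64:ℝ)*a^5*b^5*S*k1^4*Ii + (-4:ℝ)*a^5*b^5*S*k1^4*Ii^3 + (40:ℝ)*a^5*b^7*k2*Ii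 + (-80:ℝ)*a^5*b^7*k2^3*Ii + (40:ℝ)*a^5*b^7*k2^5*Ii + (-32:ℝ)*a^5*b^7*k1 + (-12:ℝ)*a^5*b^7*k1*Ii^2 + (64:ℝ)*a^5*b^7*k1*k2^2 + (-56:ℝ)*a^5*b^7*k1*k2^2*Ii^2 + (-32:ℝ)*a^5*b^7*k1*k2^4 + (68:ℝ)*a^5*b^7*k1*k2^4*Ii^2 + (-16:ℝ)*a^5*b^7*k1^2*k2*Ii + (24:ℝ)*a^5*b^7*k1^2*k2*Ii^3 + (16:ℝ)*a^5*b^7*k1^2*k2^3*Ii + (16:ℝ)*a^5*b^7*k1^2*k2^3*Ii^3 + (64:ℝ)*a^5*b^7*k1^3 + (24:ℝ)*a^5*b^7*k1^3*Ii^2 + (-64:ℝ)*a^5*b^7*k1^3*k2^2 + (24:ℝ)*a^5*b^7*k1^3*k2^2*Ii^2 + (-12:ℝ)*a^5*b^7*k1^3*k2^2*Ii^4 + (-24:ℝ)*a^5*b^7*k1^4*k2*Ii + (-24:ℝ)*a^5*b^7*k1^4*k2*Ii^3 + (-32:ℝ)*a^5*b^7*k1^5 + (-12:ℝ)*a^5*b^7*k1^5*Ii^2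 + (-48:ℝ)*a^7*b^3*S + (-4:ℝ)*a^7*b^3*S*Ii^2 + (96:ℝ)*a^7*b^3*S*k2^2 + (8:ℝ)*a^7*b^3*S*k2^2*Ii^2 + (-48:ℝ)*a^7*b^3*S*k2^4 + (-4:ℝ)*a^7*b^3*S*k2^4*Ii^2 + (64:ℝ)*a^7*b^3*S*k1*k2*Ii + (16:ℝ)*a^7*b^3*S*k1*k2*Ii^3 + (-64:ℝ)*a^7*b^3*S*k1*k2^3*Ii + (-16:ℝ)*a^7*b^3*S*k1*k2^3*Ii^3 + (96:ℝ)*a^7*b^3*S*k1^2 + (8:ℝ)*a^7*b^3*S*k1^2*Ii^2 + (-96:ℝ)*a^7*b^3*S*k1^2*k2^2 + (-24:ℝ)*a^7*b^3*S*k1^2*k2^2*Ii^2 + (-12:ℝ)*a^7*b^3*S*k1^2*k2^2*Ii^4 + (-64:ℝ)*a^7*b^3*S*k1^3*k2*Ii + (-16:ℝ)*a^7*b^3*S*k1^3*k2*Ii^3 + (-48:ℝ)*a^7*b^3*S*k1^4 + (-4:ℝ)*a^7*b^3*S*k1^4*Ii^2 + (-32:ℝ)*a^7*b^5*k2 + (-12:ℝ)*a^7*b^5*k2*Ii^2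 + (64:ℝ)*a^7*b^5*k2^3 + (24:ℝ)*a^7*b^5*k2^3*Ii^2 + (-32:ℝ)*a^7*b^5*k2^5 + (-12:ℝ)*a^7*b^5*k2^5*Ii^2 + (40:ℝ)*a^7*b^5*k1*Ii + (-16:ℝ)*a^7*b^5*k1*k2^2*Ii + (24:ℝ)*a^7*b^5*k1*k2^2*Ii^3 + (-24:ℝ)*a^7*b^5*k1*k2^4*Ii + (-24:ℝ)*a^7*b^5*k1*k2^4*Ii^3 + (64:ℝ)*a^7*b^5*k1^2*k2 + (-56:ℝ)*a^7*b^5*k1^2*k2*Ii^2 + (-64:ℝ)*a^7*b^5*k1^2*k2^3 + (24:ℝ)*a^7*b^5*k1^2*k2^3*Ii^2 + (-12:ℝ)*a^7*b^5*k1^2*k2^3*Ii^4 + (-80:ℝ)*a^7*b^5*k1^3*Ii + (16:ℝ)*a^7*b^5*k1^3*k2^2*Ii + (16:ℝ)*a^7*b^5*k1^3*k2^2*Ii^3 + (-32:ℝ)*a^7*b^5*k1^4*k2 + (68:ℝ)*a^7*b^5*k1^4*k2*Ii^2 + (40:ℝ)*a^7*b^5*k1^5*Ii + (8:ℝ)*a^9*b*S*Ii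 + (-16:ℝ)*a^9*b*S*k2^2*Ii + (8:ℝ)*a^9*b*S*k2^4*Ii + (16:ℝ)*a^9*b*S*k1*k2 + (-20:ℝ)*a^9*b*S*k1*k2*Ii^2 + (-16:ℝ)*a^9*b*S*k1*k2^3 + (20:ℝ)*a^9*b*S*k1*k2^3*Ii^2 + (-16:ℝ)*a^9*b*S*k1^2*Ii + (12:ℝ)*a^9*b*S*k1^2*k2^2*Ii^3 + (-16:ℝ)*a^9*b*S*k1^3*k2 + (20:ℝ)*a^9*b*S*k1^3*k2*Ii^2 + (8:ℝ)*a^9*b*S*k1^4*Ii + (20:ℝ)*a^9*b^3*k2*Ii + (-40:ℝ)*a^9*b^3*k2^3*Ii + (20:ℝ)*a^9*b^3*k2^5*Ii + (-24:ℝ)*a^9*b^3*k1 + (-4:ℝ)*a^9*b^3*k1*Ii^2 + (48:ℝ)*a^9*b^3*k1*k2^2 + (-32:ℝ)*a^9*b^3*k1*k2^2*Ii^2 + (-24:ℝ)*a^9*b^3*k1*k2^4 + (36:ℝ)*a^9*b^3*k1*k2^4*Ii^2 + (8:ℝ)*a^9*b^3*k1^2*k2*Ii + (8:ℝ)*a^9*b^3*k1^2*k2*Ii^3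 + (-8:ℝ)*a^9*b^3*k1^2*k2^3*Ii + (12:ℝ)*a^9*b^3*k1^2*k2^3*Ii^3 + (48:ℝ)*a^9*b^3*k1^3 + (8:ℝ)*a^9*b^3*k1^3*Ii^2 + (-48:ℝ)*a^9*b^3*k1^3*k2^2 + (8:ℝ)*a^9*b^3*k1^3*k2^2*Ii^2 + (-4:ℝ)*a^9*b^3*k1^3*k2^2*Ii^4 + (-28:ℝ)*a^9*b^3*k1^4*k2*Ii + (-8:ℝ)*a^9*b^3*k1^4*k2*Ii^3 + (-24:ℝ)*a^9*b^3*k1^5 + (-4:ℝ)*a^9*b^3*k1^5*Ii^2 + (-8:ℝ)*a^11*b*k2 + (16:ℝ)*a^11*b*k2^3 + (-8:ℝ)*a^11*b*k2^5 + (4:ℝ)*a^11*b*k1*Ii + (8:ℝ)*a^11*b*k1*k2^2*Ii + (-12:ℝ)*a^11*b*k1*k2^4*Ii + (16:ℝ)*a^11*b*k1^2*k2 + (-8:ℝ)*a^11*b*k1^2*k2*Ii^2 + (-16:ℝ)*a^11*b*k1^2*k2^3 + (-8:ℝ)*a^11*b*k1^3*Ii + (-8:ℝ)*a^11*b*k1^3*k2^2*Ii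 + (4:ℝ)*a^11*b*k1^3*k2^2*Ii^3 + (-8:ℝ)*a^11*b*k1^4*k2 + (8:ℝ)*a^11*b*k1^4*k2*Ii^2 + (4:ℝ)*a^11*b*k1^5*Ii) * hW + (((8:ℝ)*a*b^9*S*E*Ii + (-8:ℝ)*a*b^9*S*E*k2^2*Ii + (16:ℝ)*a*b^9*S*E*k1*k2 + (-12:ℝ)*a*b^9*S*E*k1*k2*Ii^2 + (-8:ℝ)*a*b^9*S*E*k1^2*Ii + (32:ℝ)*a*b^9*S*E*lam*Ii + (-8:ℝ)*a*b^9*S*E*lam*Ii^3 + (4:ℝ)*a*b^11*E*k2*Ii + (-4:ℝ)*a*b^11*E*k2^3*Ii + (-8:ℝ)*a*b^11*E*k1 + (8:ℝ)*a*b^11*E*k1*k2^2 + (-4:ℝ)*a*b^11*E*k1*k2^2*Ii^2 + (4:ℝ)*a*b^11*E*k1^2*k2*Ii + (8:ℝ)*a*b^11*E*k1^3 + (16:ℝ)*a*b^11*E*lam*k2*Ii + (-4:ℝ)*a*b^11*E*lam*k2*Ii^3 + (-32:ℝ)*a*b^11*E*lam*k1 + (8:ℝ)*a*b^11*E*lam*k1*Ii^2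 + (-48:ℝ)*a^3*b^7*S*E + (-4:ℝ)*a^3*b^7*S*E*Ii^2 + (48:ℝ)*a^3*b^7*S*E*k2^2 + (4:ℝ)*a^3*b^7*S*E*k2^2*Ii^2 + (16:ℝ)*a^3*b^7*S*E*k1*k2*Ii + (12:ℝ)*a^3*b^7*S*E*k1*k2*Ii^3 + (48:ℝ)*a^3*b^7*S*E*k1^2 + (4:ℝ)*a^3*b^7*S*E*k1^2*Ii^2 + (-128:ℝ)*a^3*b^7*S*E*lam + (8:ℝ)*a^3*b^7*S*E*lam*Ii^4 + (-24:ℝ)*a^3*b^9*E*k2 + (-4:ℝ)*a^3*b^9*E*k2*Ii^2 + (24:ℝ)*a^3*b^9*E*k2^3 + (4:ℝ)*a^3*b^9*E*k2^3*Ii^2 + (20:ℝ)*a^3*b^9*E*k1*Ii + (4:ℝ)*a^3*b^9*E*k1*k2^2*Ii + (4:ℝ)*a^3*b^9*E*k1*k2^2*Ii^3 + (24:ℝ)*a^3*b^9*E*k1^2*k2 + (-16:ℝ)*a^3*b^9*E*k1^2*k2*Ii^2 + (-20:ℝ)*a^3*b^9*E*k1^3*Ii + (-96:ℝ)*a^3*b^9*E*lam*k2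 + (8:ℝ)*a^3*b^9*E*lam*k2*Ii^2 + (4:ℝ)*a^3*b^9*E*lam*k2*Ii^4 + (80:ℝ)*a^3*b^9*E*lam*k1*Ii + (-20:ℝ)*a^3*b^9*E*lam*k1*Ii^3 + (8:ℝ)*a^3*va^2*b^9*S*Ii + (-8:ℝ)*a^3*va^2*b^9*S*k2^2*Ii + (16:ℝ)*a^3*va^2*b^9*S*k1*k2 + (-12:ℝ)*a^3*va^2*b^9*S*k1*k2*Ii^2 + (-8:ℝ)*a^3*va^2*b^9*S*k1^2*Ii + (32:ℝ)*a^3*va^2*b^9*S*lam*Ii + (-8:ℝ)*a^3*va^2*b^9*S*lam*Ii^3 + (4:ℝ)*a^3*va^2*b^11*k2*Ii + (-4:ℝ)*a^3*va^2*b^11*k2^3*Ii + (-8:ℝ)*a^3*va^2*b^11*k1 + (8:ℝ)*a^3*va^2*b^11*k1*k2^2 + (-4:ℝ)*a^3*va^2*b^11*k1*k2^2*Ii^2 + (4:ℝ)*a^3*va^2*b^11*k1^2*k2*Ii + (8:ℝ)*a^3*va^2*b^11*k1^3 + (16:ℝ)*a^3*va^2*b^11*lam*k2*Ii + (-4:ℝ)*a^3*va^2*b^11*lam*k2*Ii^3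 + (-32:ℝ)*a^3*va^2*b^11*lam*k1 + (8:ℝ)*a^3*va^2*b^11*lam*k1*Ii^2 + (-16:ℝ)*a^4*va*b^8*vb*S*Ii + (16:ℝ)*a^4*va*b^8*vb*S*k2^2*Ii + (-32:ℝ)*a^4*va*b^8*vb*S*k1*k2 + (24:ℝ)*a^4*va*b^8*vb*S*k1*k2*Ii^2 + (16:ℝ)*a^4*va*b^8*vb*S*k1^2*Ii + (-64:ℝ)*a^4*va*b^8*vb*S*lam*Ii + (16:ℝ)*a^4*va*b^8*vb*S*lam*Ii^3 + (-8:ℝ)*a^4*va*b^10*vb*k2*Ii + (8:ℝ)*a^4*va*b^10*vb*k2^3*Ii + (16:ℝ)*a^4*va*b^10*vb*k1 + (-16:ℝ)*a^4*va*b^10*vb*k1*k2^2 + (8:ℝ)*a^4*va*b^10*vb*k1*k2^2*Ii^2 + (-8:ℝ)*a^4*va*b^10*vb*k1^2*k2*Ii + (-16:ℝ)*a^4*va*b^10*vb*k1^3 + (-32:ℝ)*a^4*va*b^10*vb*lam*k2*Ii + (8:ℝ)*a^4*va*b^10*vb*lam*k2*Ii^3 + (64:ℝ)*a^4*va*b^10*vb*lam*k1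 + (-16:ℝ)*a^4*va*b^10*vb*lam*k1*Ii^2 + (64:ℝ)*a^5*b^5*S*E*Ii + (-4:ℝ)*a^5*b^5*S*E*Ii^3 + (-64:ℝ)*a^5*b^5*S*E*k2^2*Ii + (4:ℝ)*a^5*b^5*S*E*k2^2*Ii^3 + (32:ℝ)*a^5*b^5*S*E*k1*k2 + (-56:ℝ)*a^5*b^5*S*E*k1*k2*Ii^2 + (-64:ℝ)*a^5*b^5*S*E*k1^2*Ii + (4:ℝ)*a^5*b^5*S*E*k1^2*Ii^3 + (192:ℝ)*a^5*b^5*S*E*lam*Ii + (-48:ℝ)*a^5*b^5*S*E*lam*Ii^3 + (40:ℝ)*a^5*b^7*E*k2*Ii + (-40:ℝ)*a^5*b^7*E*k2^3*Ii + (-32:ℝ)*a^5*b^7*E*k1 + (-12:ℝ)*a^5*b^7*E*k1*Ii^2 + (32:ℝ)*a^5*b^7*E*k1*k2^2 + (-28:ℝ)*a^5*b^7*E*k1*k2^2*Ii^2 + (-8:ℝ)*a^5*b^7*E*k1^2*k2*Ii + (12:ℝ)*a^5*b^7*E*k1^2*k2*Ii^3 + (32:ℝ)*a^5*b^7*E*k1^3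 + (12:ℝ)*a^5*b^7*E*k1^3*Ii^2 + (160:ℝ)*a^5*b^7*E*lam*k2*Ii + (-40:ℝ)*a^5*b^7*E*lam*k2*Ii^3 + (-128:ℝ)*a^5*b^7*E*lam*k1 + (-16:ℝ)*a^5*b^7*E*lam*k1*Ii^2 + (12:ℝ)*a^5*b^7*E*lam*k1*Ii^4 + (8:ℝ)*a^5*b^7*vb^2*S*Ii + (-8:ℝ)*a^5*b^7*vb^2*S*k2^2*Ii + (16:ℝ)*a^5*b^7*vb^2*S*k1*k2 + (-12:ℝ)*a^5*b^7*vb^2*S*k1*k2*Ii^2 + (-8:ℝ)*a^5*b^7*vb^2*S*k1^2*Ii + (32:ℝ)*a^5*b^7*vb^2*S*lam*Ii + (-8:ℝ)*a^5*b^7*vb^2*S*lam*Ii^3 + (4:ℝ)*a^5*b^9*vb^2*k2*Ii + (-4:ℝ)*a^5*b^9*vb^2*k2^3*Ii + (-8:ℝ)*a^5*b^9*vb^2*k1 + (8:ℝ)*a^5*b^9*vb^2*k1*k2^2 + (-4:ℝ)*a^5*b^9*vb^2*k1*k2^2*Ii^2 + (4:ℝ)*a^5*b^9*vb^2*k1^2*k2*Ii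 + (8:ℝ)*a^5*b^9*vb^2*k1^3 + (16:ℝ)*a^5*b^9*vb^2*lam*k2*Ii + (-4:ℝ)*a^5*b^9*vb^2*lam*k2*Ii^3 + (-32:ℝ)*a^5*b^9*vb^2*lam*k1 + (8:ℝ)*a^5*b^9*vb^2*lam*k1*Ii^2 + (-48:ℝ)*a^5*va^2*b^7*S + (4:ℝ)*a^5*va^2*b^7*S*Ii^2 + (48:ℝ)*a^5*va^2*b^7*S*k2^2 + (-4:ℝ)*a^5*va^2*b^7*S*k2^2*Ii^2 + (32:ℝ)*a^5*va^2*b^7*S*k1*k2*Ii + (48:ℝ)*a^5*va^2*b^7*S*k1^2 + (-4:ℝ)*a^5*va^2*b^7*S*k1^2*Ii^2 + (-192:ℝ)*a^5*va^2*b^7*S*lam + (64:ℝ)*a^5*va^2*b^7*S*lam*Ii^2 + (-4:ℝ)*a^5*va^2*b^7*S*lam*Ii^4 + (-24:ℝ)*a^5*va^2*b^9*k2 + (24:ℝ)*a^5*va^2*b^9*k2^3 + (12:ℝ)*a^5*va^2*b^9*k1*Ii + (12:ℝ)*a^5*va^2*b^9*k1*k2^2*Ii + (24:ℝ)*a^5*va^2*b^9*k1^2*k2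 + (-12:ℝ)*a^5*va^2*b^9*k1^2*k2*Ii^2 + (-12:ℝ)*a^5*va^2*b^9*k1^3*Ii + (-96:ℝ)*a^5*va^2*b^9*lam*k2 + (24:ℝ)*a^5*va^2*b^9*lam*k2*Ii^2 + (48:ℝ)*a^5*va^2*b^9*lam*k1*Ii + (-12:ℝ)*a^5*va^2*b^9*lam*k1*Ii^3 + (96:ℝ)*a^6*va*b^6*vb*S + (-8:ℝ)*a^6*va*b^6*vb*S*Ii^2 + (-96:ℝ)*a^6*va*b^6*vb*S*k2^2 + (8:ℝ)*a^6*va*b^6*vb*S*k2^2*Ii^2 + (-64:ℝ)*a^6*va*b^6*vb*S*k1*k2*Ii + (-96:ℝ)*a^6*va*b^6*vb*S*k1^2 + (8:ℝ)*a^6*va*b^6*vb*S*k1^2*Ii^2 + (384:ℝ)*a^6*va*b^6*vb*S*lam + (-128:ℝ)*a^6*va*b^6*vb*S*lam*Ii^2 + (8:ℝ)*a^6*va*b^6*vb*S*lam*Ii^4 + (48:ℝ)*a^6*va*b^8*vb*k2 + (-48:ℝ)*a^6*va*b^8*vb*k2^3 + (-24:ℝ)*a^6*va*b^8*vb*k1*Ii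 + (-24:ℝ)*a^6*va*b^8*vb*k1*k2^2*Ii + (-48:ℝ)*a^6*va*b^8*vb*k1^2*k2 + (24:ℝ)*a^6*va*b^8*vb*k1^2*k2*Ii^2 + (24:ℝ)*a^6*va*b^8*vb*k1^3*Ii + (192:ℝ)*a^6*va*b^8*vb*lam*k2 + (-48:ℝ)*a^6*va*b^8*vb*lam*k2*Ii^2 + (-96:ℝ)*a^6*va*b^8*vb*lam*k1*Ii + (24:ℝ)*a^6*va*b^8*vb*lam*k1*Ii^3 + (-48:ℝ)*a^7*b^3*S*E + (-4:ℝ)*a^7*b^3*S*E*Ii^2 + (48:ℝ)*a^7*b^3*S*E*k2^2 + (4:ℝ)*a^7*b^3*S*E*k2^2*Ii^2 + (16:ℝ)*a^7*b^3*S*E*k1*k2*Ii + (12:ℝ)*a^7*b^3*S*E*k1*k2*Ii^3 + (48:ℝ)*a^7*b^3*S*E*k1^2 + (4:ℝ)*a^7*b^3*S*E*k1^2*Ii^2 + (-128:ℝ)*a^7*b^3*S*E*lam + (8:ℝ)*a^7*b^3*S*E*lam*Ii^4 + (-32:ℝ)*a^7*b^5*E*k2 + (-12:ℝ)*a^7*b^5*E*k2*Ii^2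 + (32:ℝ)*a^7*b^5*E*k2^3 + (12:ℝ)*a^7*b^5*E*k2^3*Ii^2 + (40:ℝ)*a^7*b^5*E*k1*Ii + (-8:ℝ)*a^7*b^5*E*k1*k2^2*Ii + (12:ℝ)*a^7*b^5*E*k1*k2^2*Ii^3 + (32:ℝ)*a^7*b^5*E*k1^2*k2 + (-28:ℝ)*a^7*b^5*E*k1^2*k2*Ii^2 + (-40:ℝ)*a^7*b^5*E*k1^3*Ii + (-128:ℝ)*a^7*b^5*E*lam*k2 + (-16:ℝ)*a^7*b^5*E*lam*k2*Ii^2 + (12:ℝ)*a^7*b^5*E*lam*k2*Ii^4 + (160:ℝ)*a^7*b^5*E*lam*k1*Ii + (-40:ℝ)*a^7*b^5*E*lam*k1*Ii^3 + (-48:ℝ)*a^7*b^5*vb^2*S + (4:ℝ)*a^7*b^5*vb^2*S*Ii^2 + (48:ℝ)*a^7*b^5*vb^2*S*k2^2 + (-4:ℝ)*a^7*b^5*vb^2*S*k2^2*Ii^2 + (32:ℝ)*a^7*b^5*vb^2*S*k1*k2*Ii + (48:ℝ)*a^7*b^5*vb^2*S*k1^2 + (-4:ℝ)*a^7*b^5*vb^2*S*k1^2*Ii^2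 + (-192:ℝ)*a^7*b^5*vb^2*S*lam + (64:ℝ)*a^7*b^5*vb^2*S*lam*Ii^2 + (-4:ℝ)*a^7*b^5*vb^2*S*lam*Ii^4 + (-24:ℝ)*a^7*b^7*vb^2*k2 + (24:ℝ)*a^7*b^7*vb^2*k2^3 + (12:ℝ)*a^7*b^7*vb^2*k1*Ii + (12:ℝ)*a^7*b^7*vb^2*k1*k2^2*Ii + (24:ℝ)*a^7*b^7*vb^2*k1^2*k2 + (-12:ℝ)*a^7*b^7*vb^2*k1^2*k2*Ii^2 + (-12:ℝ)*a^7*b^7*vb^2*k1^3*Ii + (-96:ℝ)*a^7*b^7*vb^2*lam*k2 + (24:ℝ)*a^7*b^7*vb^2*lam*k2*Ii^2 + (48:ℝ)*a^7*b^7*vb^2*lam*k1*Ii + (-12:ℝ)*a^7*b^7*vb^2*lam*k1*Ii^3 + (8:ℝ)*a^7*va^2*b^5*S*Ii + (-8:ℝ)*a^7*va^2*b^5*S*k2^2*Ii + (16:ℝ)*a^7*va^2*b^5*S*k1*k2 + (-12:ℝ)*a^7*va^2*b^5*S*k1*k2*Ii^2 + (-8:ℝ)*a^7*va^2*b^5*S*k1^2*Ii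 + (32:ℝ)*a^7*va^2*b^5*S*lam*Ii + (-8:ℝ)*a^7*va^2*b^5*S*lam*Ii^3 + (12:ℝ)*a^7*va^2*b^7*k2*Ii + (-12:ℝ)*a^7*va^2*b^7*k2^3*Ii + (-24:ℝ)*a^7*va^2*b^7*k1 + (24:ℝ)*a^7*va^2*b^7*k1*k2^2 + (-12:ℝ)*a^7*va^2*b^7*k1*k2^2*Ii^2 + (12:ℝ)*a^7*va^2*b^7*k1^2*k2*Ii + (24:ℝ)*a^7*va^2*b^7*k1^3 + (48:ℝ)*a^7*va^2*b^7*lam*k2*Ii + (-12:ℝ)*a^7*va^2*b^7*lam*k2*Ii^3 + (-96:ℝ)*a^7*va^2*b^7*lam*k1 + (24:ℝ)*a^7*va^2*b^7*lam*k1*Ii^2 + (-16:ℝ)*a^8*va*b^4*vb*S*Ii + (16:ℝ)*a^8*va*b^4*vb*S*k2^2*Ii + (-32:ℝ)*a^8*va*b^4*vb*S*k1*k2 + (24:ℝ)*a^8*va*b^4*vb*S*k1*k2*Ii^2 + (16:ℝ)*a^8*va*b^4*vb*S*k1^2*Ii + (-64:ℝ)*a^8*va*b^4*vb*S*lam*Ii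 + (16:ℝ)*a^8*va*b^4*vb*S*lam*Ii^3 + (-24:ℝ)*a^8*va*b^6*vb*k2*Ii + (24:ℝ)*a^8*va*b^6*vb*k2^3*Ii + (48:ℝ)*a^8*va*b^6*vb*k1 + (-48:ℝ)*a^8*va*b^6*vb*k1*k2^2 + (24:ℝ)*a^8*va*b^6*vb*k1*k2^2*Ii^2 + (-24:ℝ)*a^8*va*b^6*vb*k1^2*k2*Ii + (-48:ℝ)*a^8*va*b^6*vb*k1^3 + (-96:ℝ)*a^8*va*b^6*vb*lam*k2*Ii + (24:ℝ)*a^8*va*b^6*vb*lam*k2*Ii^3 + (192:ℝ)*a^8*va*b^6*vb*lam*k1 + (-48:ℝ)*a^8*va*b^6*vb*lam*k1*Ii^2 + (8:ℝ)*a^9*b*S*E*Ii + (-8:ℝ)*a^9*b*S*E*k2^2*Ii + (16:ℝ)*a^9*b*S*E*k1*k2 + (-12:ℝ)*a^9*b*S*E*k1*k2*Ii^2 + (-8:ℝ)*a^9*b*S*E*k1^2*Ii + (32:ℝ)*a^9*b*S*E*lam*Ii + (-8:ℝ)*a^9*b*S*E*lam*Ii^3 + (20:ℝ)*a^9*b^3*E*k2*Ii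 + (-20:ℝ)*a^9*b^3*E*k2^3*Ii + (-24:ℝ)*a^9*b^3*E*k1 + (-4:ℝ)*a^9*b^3*E*k1*Ii^2 + (24:ℝ)*a^9*b^3*E*k1*k2^2 + (-16:ℝ)*a^9*b^3*E*k1*k2^2*Ii^2 + (4:ℝ)*a^9*b^3*E*k1^2*k2*Ii + (4:ℝ)*a^9*b^3*E*k1^2*k2*Ii^3 + (24:ℝ)*a^9*b^3*E*k1^3 + (4:ℝ)*a^9*b^3*E*k1^3*Ii^2 + (80:ℝ)*a^9*b^3*E*lam*k2*Ii + (-20:ℝ)*a^9*b^3*E*lam*k2*Ii^3 + (-96:ℝ)*a^9*b^3*E*lam*k1 + (8:ℝ)*a^9*b^3*E*lam*k1*Ii^2 + (4:ℝ)*a^9*b^3*E*lam*k1*Ii^4 + (8:ℝ)*a^9*b^3*vb^2*S*Ii + (-8:ℝ)*a^9*b^3*vb^2*S*k2^2*Ii + (16:ℝ)*a^9*b^3*vb^2*S*k1*k2 + (-12:ℝ)*a^9*b^3*vb^2*S*k1*k2*Ii^2 + (-8:ℝ)*a^9*b^3*vb^2*S*k1^2*Ii + (32:ℝ)*a^9*b^3*vb^2*S*lam*Ii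 + (-8:ℝ)*a^9*b^3*vb^2*S*lam*Ii^3 + (12:ℝ)*a^9*b^5*vb^2*k2*Ii + (-12:ℝ)*a^9*b^5*vb^2*k2^3*Ii + (-24:ℝ)*a^9*b^5*vb^2*k1 + (24:ℝ)*a^9*b^5*vb^2*k1*k2^2 + (-12:ℝ)*a^9*b^5*vb^2*k1*k2^2*Ii^2 + (12:ℝ)*a^9*b^5*vb^2*k1^2*k2*Ii + (24:ℝ)*a^9*b^5*vb^2*k1^3 + (48:ℝ)*a^9*b^5*vb^2*lam*k2*Ii + (-12:ℝ)*a^9*b^5*vb^2*lam*k2*Ii^3 + (-96:ℝ)*a^9*b^5*vb^2*lam*k1 + (24:ℝ)*a^9*b^5*vb^2*lam*k1*Ii^2 + (-8:ℝ)*a^9*va^2*b^5*k2 + (8:ℝ)*a^9*va^2*b^5*k2^3 + (4:ℝ)*a^9*va^2*b^5*k1*Ii + (4:ℝ)*a^9*va^2*b^5*k1*k2^2*Ii + (8:ℝ)*a^9*va^2*b^5*k1^2*k2 + (-4:ℝ)*a^9*va^2*b^5*k1^2*k2*Ii^2 + (-4:ℝ)*a^9*va^2*b^5*k1^3*Ii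 + (-32:ℝ)*a^9*va^2*b^5*lam*k2 + (8:ℝ)*a^9*va^2*b^5*lam*k2*Ii^2 + (16:ℝ)*a^9*va^2*b^5*lam*k1*Ii + (-4:ℝ)*a^9*va^2*b^5*lam*k1*Ii^3 + (16:ℝ)*a^10*va*b^4*vb*k2 + (-16:ℝ)*a^10*va*b^4*vb*k2^3 + (-8:ℝ)*a^10*va*b^4*vb*k1*Ii + (-8:ℝ)*a^10*va*b^4*vb*k1*k2^2*Ii + (-16:ℝ)*a^10*va*b^4*vb*k1^2*k2 + (8:ℝ)*a^10*va*b^4*vb*k1^2*k2*Ii^2 + (8:ℝ)*a^10*va*b^4*vb*k1^3*Ii + (64:ℝ)*a^10*va*b^4*vb*lam*k2 + (-16:ℝ)*a^10*va*b^4*vb*lam*k2*Ii^2 + (-32:ℝ)*a^10*va*b^4*vb*lam*k1*Ii + (8:ℝ)*a^10*va*b^4*vb*lam*k1*Ii^3 + (-8:ℝ)*a^11*b*E*k2 + (8:ℝ)*a^11*b*E*k2^3 + (4:ℝ)*a^11*b*E*k1*Ii + (4:ℝ)*a^11*b*E*k1*k2^2*Ii + (8:ℝ)*a^11*b*E*k1^2*k2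 + (-4:ℝ)*a^11*b*E*k1^2*k2*Ii^2 + (-4:ℝ)*a^11*b*E*k1^3*Ii + (-32:ℝ)*a^11*b*E*lam*k2 + (8:ℝ)*a^11*b*E*lam*k2*Ii^2 + (16:ℝ)*a^11*b*E*lam*k1*Ii + (-4:ℝ)*a^11*b*E*lam*k1*Ii^3 + (-8:ℝ)*a^11*b^3*vb^2*k2 + (8:ℝ)*a^11*b^3*vb^2*k2^3 + (4:ℝ)*a^11*b^3*vb^2*k1*Ii + (4:ℝ)*a^11*b^3*vb^2*k1*k2^2*Ii + (8:ℝ)*a^11*b^3*vb^2*k1^2*k2 + (-4:ℝ)*a^11*b^3*vb^2*k1^2*k2*Ii^2 + (-4:ℝ)*a^11*b^3*vb^2*k1^3*Ii + (-32:ℝ)*a^11*b^3*vb^2*lam*k2 + (8:ℝ)*a^11*b^3*vb^2*lam*k2*Ii^2 + (16:ℝ)*a^11*b^3*vb^2*lam*k1*Ii + (-4:ℝ)*a^11*b^3*vb^2*lam*k1*Ii^3)*(-(a^4+b^4)+Ii*a^2*b^2)) * h3 + (((4:ℝ)*a*b^3*S^3*E*k1 + (4:ℝ)*a*b^5*S^2*E*lam*Ii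 + (4:ℝ)*a^3*b*S^3*E*k2 + (-16:ℝ)*a^3*b^3*S^2*E*lam + (-4:ℝ)*a^3*b^3*S^3*q^2*w^2 + (-8:ℝ)*a^3*b^3*S^4*w^2 + (4:ℝ)*a^3*b^3*vb^2*S^3*k2 + (-24:ℝ)*a^3*b^5*vb^2*S^2*lam + (-8:ℝ)*a^3*b^7*S^2*w^2*lam + (-16:ℝ)*a^3*b^9*vb^2*lam^2 + (4:ℝ)*a^3*va^2*b^3*S^3*k1 + (4:ℝ)*a^3*va^2*b^5*S^2*lam*Ii + (16:ℝ)*a^4*va*b^4*vb*S^2*lam*Ii + (16:ℝ)*a^4*va*b^8*vb*lam^2*Ii + (4:ℝ)*a^5*b*S^2*E*lam*Ii + (4:ℝ)*a^5*b^3*vb^2*S^2*lam*Ii + (8:ℝ)*a^5*b^5*S^2*w^2*lam*Ii + (16:ℝ)*a^5*b^7*vb^2*lam^2*Ii + (-24:ℝ)*a^5*va^2*b^3*S^2*lam + (-4:ℝ)*a^5*va^2*b^7*lam^2*Ii^2 + (-32:ℝ)*a^6*va*b^6*vb*lam^2 + (-8:ℝ)*a^6*va*b^6*vb*lam^2*Ii^2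 + (-8:ℝ)*a^7*b^3*S^2*w^2*lam + (-4:ℝ)*a^7*b^5*vb^2*lam^2*Ii^2 + (16:ℝ)*a^7*va^2*b^5*lam^2*Ii + (16:ℝ)*a^8*va*b^4*vb*lam^2*Ii + (-16:ℝ)*a^9*va^2*b^3*lam^2)*((Ii^2-4)^2*(-(a^4+b^4)+Ii*a^2*b^2))) * h4
  exact (mul_eq_zero.mp key).resolve_right hM

private lemma mp_final (q UD UDD E f w : ℝ) (hq : q ≠ 0)
    (key : 2*q^2*UDD - UD^2 + 2*f*q^2*UD - 4*w^2*q^4 - 4*E = 0) :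
    -f*(UD/(2*q)) + w^2*q + E*(q^3)⁻¹ = (UDD*(2*q) - UD*(2*(UD/(2*q))))/(2*q)^2 := by
  field_simp
  linear_combination (-1) * key

private lemma mp_nd (a va b vb S E f w lam k1 k2 Ii : ℝ) (hS : S ≠ 0) (ha : a ≠ 0) (hb : b ≠ 0) :
    2*k1*(va*va + a*(-f*va + w^2*a + E*(a^3)⁻¹)) + 2*k2*(vb*vb + b*(-f*vb + w^2*b + E*(b^3)⁻¹)) + 2*((lam*(-(12*a^2*va^2 + 4*a^3*(-f*va + w^2*a + E*(a^3)⁻¹) + 12*b^2*vb^2 + 4*b^3*(-f*vb + w^2*b + E*(b^3)⁻¹)) + Ii*(2*(va^2*b^2 + a*(-f*va + w^2*a + E*(a^3)⁻¹)*b^2 + 2*(a*va)*(b*vb)) + 2*(vb^2*a^2 + b*(-f*vb + w^2*b + E*(b^3)⁻¹)*a^2 + 2*(b*vb)*(a*va))))*(2*S) - lam*(-(4*a^3*va + 4*b^3*vb) + Ii*(2*(a*va)*b^2 + 2*(b*vb)*a^2))*(2*(lam*(-(4*a^3*va + 4*b^3*vb) + Ii*(2*(a*va)*b^2 + 2*(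b*vb)*a^2))/(2*S))))/(2*S)^2)
    = 2*k1*(va^2 + a*(-f*va + w^2*a + E*(a^3)⁻¹)) + 2*k2*(vb^2 + b*(-f*vb + w^2*b + E*(b^3)⁻¹)) + (lam*(-(12*a^2*va^2 + 4*a^3*(-f*va + w^2*a + E*(a^3)⁻¹) + 12*b^2*vb^2 + 4*b^3*(-f*vb + w^2*b + E*(b^3)⁻¹)) + Ii*(2*(va^2*b^2 + a*(-f*va + w^2*a + E*(a^3)⁻¹)*b^2 + 2*(a*va)*(b*vb)) + 2*(vb^2*a^2 + b*(-f*vb + w^2*b + E*(b^3)⁻¹)*a^2 + 2*(b*vb)*(a*va))))/S - lam^2*(-(4*a^3*va + 4*b^3*vb) + Ii*(2*(a*va)*b^2 + 2*(b*vb)*a^2))^2/(2*S^3)) := by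
  field_simp

private lemma mp_ud (a va b vb S E f w lam k1 k2 Ii : ℝ) (hS : S ≠ 0) :
    (2*k1*(a*va) + 2*k2*(b*vb) + 2*(lam*(-(4*a^3*va + 4*b^3*vb) + Ii*(2*(a*va)*b^2 + 2*(b*vb)*a^2))/(2*S))) * S = ((2:ℝ)*b*vb*S*k2 + (-4:ℝ)*b^3*vb*lam + (2:ℝ)*a*va*S*k1 + (2:ℝ)*a*va*b^2*lam*Ii + (2:ℝ)*a^2*b*vb*lam*Ii + (-4:ℝ)*a^3*va*lam) := by
  field_simp
  ring

set_option maxHeartbeats 800000 in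
private lemma mp_udd (a va b vb S E f w lam k1 k2 Ii : ℝ) (hS : S ≠ 0) (ha : a ≠ 0) (hb : b ≠ 0) :
    (2*k1*(va^2 + a*(-f*va + w^2*a + E*(a^3)⁻¹)) + 2*k2*(vb^2 + b*(-f*vb + w^2*b + E*(b^3)⁻¹)) + (lam*(-(12*a^2*va^2 + 4*a^3*(-f*va + w^2*a + E*(a^3)⁻¹) + 12*b^2*vb^2 + 4*b^3*(-f*vb + w^2*b + E*(b^3)⁻¹)) + Ii*(2*(va^2*b^2 + a*(-f*va + w^2*a + E*(a^3)⁻¹)*b^2 + 2*(a*va)*(b*vb)) + 2*(vb^2*a^2 + b*(-f*vb + w^2*b + E*(b^3)⁻¹)*a^2 + 2*(b*vb)*(a*va))))/S - lam^2*(-(4*a^3*va + 4*b^3*vb) + Ii*(2*(a*va)*b^2 + 2*(b*vb)*a^2))^2/(2*S^3))) * (S^3*a^3*b^3) = ((2:ℝ)*a*b^3*S^3*E*k1 + (2:ℝ)*a*b^5*S^2*E*lam*Ii + (2:ℝ)*a^3*b*S^3*E*k2 + (-8:ℝ)*a^3*b^3*S^2*E*lam + (2:ℝ)*a^3*b^3*vb^2*S^3*k2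 + (-2:ℝ)*a^3*b^4*vb*S^3*f*k2 + (2:ℝ)*a^3*b^5*S^3*w^2*k2 + (-12:ℝ)*a^3*b^5*vb^2*S^2*lam + (4:ℝ)*a^3*b^6*vb*S^2*f*lam + (-4:ℝ)*a^3*b^7*S^2*w^2*lam + (-8:ℝ)*a^3*b^9*vb^2*lam^2 + (2:ℝ)*a^3*va^2*b^3*S^3*k1 + (2:ℝ)*a^3*va^2*b^5*S^2*lam*Ii + (-2:ℝ)*a^4*va*b^3*S^3*f*k1 + (8:ℝ)*a^4*va*b^4*vb*S^2*lam*Ii + (-2:ℝ)*a^4*va*b^5*S^2*f*lam*Ii + (8:ℝ)*a^4*va*b^8*vb*lam^2*Ii + (2:ℝ)*a^5*b*S^2*E*lam*Ii + (2:ℝ)*a^5*b^3*S^3*w^2*k1 + (2:ℝ)*a^5*b^3*vb^2*S^2*lam*Ii + (-2:ℝ)*a^5*b^4*vb*S^2*f*lam*Ii + (4:ℝ)*a^5*b^5*S^2*w^2*lam*Ii + (8:ℝ)*a^5*b^7*vb^2*lam^2*Ii + (-12:ℝ)*a^5*va^2*b^3*S^2*lam + (-2:ℝ)*a^5*va^2*b^7*lam^2*Ii^2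 + (4:ℝ)*a^6*va*b^3*S^2*f*lam + (-16:ℝ)*a^6*va*b^6*vb*lam^2 + (-4:ℝ)*a^6*va*b^6*vb*lam^2*Ii^2 + (-4:ℝ)*a^7*b^3*S^2*w^2*lam + (-2:ℝ)*a^7*b^5*vb^2*lam^2*Ii^2 + (8:ℝ)*a^7*va^2*b^5*lam^2*Ii + (8:ℝ)*a^8*va*b^4*vb*lam^2*Ii + (-8:ℝ)*a^9*va^2*b^3*lam^2) := by
  field_simp
  ring

/-- `k₁x₁²(t) + k₂x₂²(t) + 2√(λ₁₂(−(x₁⁴(t)+x₂⁴(t)) + I x₁²(t)x₂²(t)))`, the square of the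
common time-dependent superposition rule for dissipative Milne–Pinney equations. -/
noncomputable def mpSupSq (k₁ k₂ I lam : ℝ) (x₁ x₂ : ℝ → ℝ) (t : ℝ) : ℝ :=
  k₁ * (x₁ t) ^ 2 + k₂ * (x₂ t) ^ 2
    + 2 * Real.sqrt (lam * (-((x₁ t) ^ 4 + (x₂ t) ^ 4) + I * (x₁ t) ^ 2 * (x₂ t) ^ 2))

set_option maxHeartbeats 1600000 in
/-- The common time-dependent superposition rule for the Lie family of dissipative
Milne–Pinney equations `ẍ = −F'(t)ẋ + ω²(t)x + e^{−2F(t)}x^{−3}`: if `x₁, x₂` are positive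
solutions on an interval `J`, `I` is the constant value of
`e^{2F}(x₁ẋ₂ − x₂ẋ₁)² + (x₁/x₂)² + (x₂/x₁)²`, `I² ≠ 4`,
`λ₁₂ = (k₁k₂I + k₁² + k₂² − 1)/(I² − 4)`, and the expressions under the square roots are
positive on `J`, then `x(t) = √(k₁x₁² + k₂x₂² + 2√(λ₁₂(−(x₁⁴+x₂⁴) + I x₁²x₂²)))` is twice
differentiable and is again a solution on `J`. -/
theorem mp_superposition_rule (J : Set ℝ) (hJ : J.OrdConnected)
    (F : ℝ → ℝ) (hF : ContDiff ℝ 2 F) (ω : ℝ → ℝ) (hω : ContinuousOn ω J)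
    (x₁ x₂ v₁ v₂ : ℝ → ℝ)
    (hx₁ : ∀ t ∈ J, 0 < x₁ t) (hx₂ : ∀ t ∈ J, 0 < x₂ t)
    (hx₁' : ∀ t ∈ J, HasDerivWithinAt x₁ (v₁ t) J t)
    (hx₂' : ∀ t ∈ J, HasDerivWithinAt x₂ (v₂ t) J t)
    (hv₁' : ∀ t ∈ J, HasDerivWithinAt v₁
      (-(deriv F t) * v₁ t + (ω t) ^ 2 * x₁ t + Real.exp (-(2 * F t)) * ((x₁ t) ^ 3)⁻¹) J t)
    (hv₂' : ∀ t ∈ J, HasDerivWithinAt v₂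
      (-(deriv F t) * v₂ t + (ω t) ^ 2 * x₂ t + Real.exp (-(2 * F t)) * ((x₂ t) ^ 3)⁻¹) J t)
    (I : ℝ)
    (hI : ∀ t ∈ J,
      Real.exp (2 * F t) * (x₁ t * v₂ t - x₂ t * v₁ t) ^ 2
        + (x₁ t / x₂ t) ^ 2 + (x₂ t / x₁ t) ^ 2 = I)
    (k₁ k₂ lam : ℝ) (hI4 : I ^ 2 ≠ 4)
    (hlam : lam = (k₁ * k₂ * I + k₁ ^ 2 + k₂ ^ 2 - 1) / (I ^ 2 - 4))
    (hpos₁ : ∀ t ∈ J,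
      0 < lam * (-((x₁ t) ^ 4 + (x₂ t) ^ 4) + I * (x₁ t) ^ 2 * (x₂ t) ^ 2))
    (hpos₂ : ∀ t ∈ J, 0 < mpSupSq k₁ k₂ I lam x₁ x₂ t) :
    ∃ xd : ℝ → ℝ,
      (∀ t ∈ J, HasDerivWithinAt
        (fun s => Real.sqrt (mpSupSq k₁ k₂ I lam x₁ x₂ s)) (xd t) J t)
      ∧ (∀ t ∈ J, HasDerivWithinAt xd
          (-(deriv F t) * xd t + (ω t) ^ 2 * Real.sqrt (mpSupSq k₁ k₂ I lam x₁ x₂ t)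
            + Real.exp (-(2 * F t)) * ((Real.sqrt (mpSupSq k₁ k₂ I lam x₁ x₂ t)) ^ 3)⁻¹)
          J t) := by
  have hI4' : I ^ 2 - 4 ≠ 0 := sub_ne_zero.mpr hI4
  set N : ℝ → ℝ := fun s =>
    2*k₁*(x₁ s*v₁ s) + 2*k₂*(x₂ s*v₂ s) +
      2*(lam*(-(4*(x₁ s)^3*v₁ s + 4*(x₂ s)^3*v₂ s)
            + I*(2*(x₁ s*v₁ s)*(x₂ s)^2 + 2*(x₂ s*v₂ s)*(x₁ s)^2)) /
        (2*Real.sqrt (lam * (-((x₁ s) ^ 4 + (x₂ s) ^ 4) + I * (x₁ s) ^ 2 * (x₂ s) ^ 2)))) with hN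
  have hS0 : ∀ t ∈ J,
      Real.sqrt (lam * (-((x₁ t) ^ 4 + (x₂ t) ^ 4) + I * (x₁ t) ^ 2 * (x₂ t) ^ 2)) ≠ 0 :=
    fun t ht => ne_of_gt (Real.sqrt_pos.mpr (hpos₁ t ht))
  have hq0 : ∀ t ∈ J, Real.sqrt (mpSupSq k₁ k₂ I lam x₁ x₂ t) ≠ 0 :=
    fun t ht => ne_of_gt (Real.sqrt_pos.mpr (hpos₂ t ht))
  have hInner : ∀ t ∈ J, HasDerivWithinAt
      (fun s => lam * (-((x₁ s) ^ 4 + (x₂ s) ^ 4) + I * (x₁ s) ^ 2 * (x₂ s) ^ 2))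
      (lam * (-(4*(x₁ t)^3*v₁ t + 4*(x₂ t)^3*v₂ t)
            + I*(2*(x₁ t*v₁ t)*(x₂ t)^2 + 2*(x₂ t*v₂ t)*(x₁ t)^2))) J t := by
    intro t ht
    exact (((((hx₁' t ht).pow 4).add ((hx₂' t ht).pow 4)).neg.add
      ((((hx₁' t ht).pow 2).const_mul I).mul ((hx₂' t ht).pow 2))).const_mul lam).congr_deriv
      (by simp only [Pi.pow_apply, Pi.mul_apply]; push_cast; ring)
  have hu : ∀ t ∈ J, HasDerivWithinAt (fun s => mpSupSq k₁ k₂ I lam x₁ x₂ s) (N t) J t := by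
    intro t ht
    show HasDerivWithinAt (fun s => k₁ * (x₁ s) ^ 2 + k₂ * (x₂ s) ^ 2
      + 2 * Real.sqrt (lam * (-((x₁ s) ^ 4 + (x₂ s) ^ 4) + I * (x₁ s) ^ 2 * (x₂ s) ^ 2))) (N t) J t
    refine (((((hx₁' t ht).pow 2).const_mul k₁).add (((hx₂' t ht).pow 2).const_mul k₂)).add
      (((hInner t ht).sqrt (ne_of_gt (hpos₁ t ht))).const_mul 2)).congr_deriv ?_
    rw [hN]
    push_cast; ring
  refine ⟨fun s => N s / (2 * Real.sqrt (mpSupSq k₁ k₂ I lam x₁ x₂ s)), fun t ht => ?_,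
    fun t ht => ?_⟩
  · exact (hu t ht).sqrt (ne_of_gt (hpos₂ t ht))
  · have hX1 := hx₁' t ht
    have hX2 := hx₂' t ht
    have hV1 := hv₁' t ht
    have hV2 := hv₂' t ht
    have ha : x₁ t ≠ 0 := (hx₁ t ht).ne'
    have hb : x₂ t ≠ 0 := (hx₂ t ht).ne'
    have hSne := hS0 t ht
    have hqne := hq0 t ht
    have hRd : HasDerivWithinAt
        (fun s => lam*(-(4*(x₁ s)^3*v₁ s + 4*(x₂ s)^3*v₂ s)
            + I*(2*(x₁ s*v₁ s)*(x₂ s)^2 + 2*(x₂ s*v₂ s)*(x₁ s)^2)))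
        (lam*(-(12*(x₁ t)^2*(v₁ t)^2 + 4*(x₁ t)^3*(-(deriv F t)*(v₁ t) + (ω t)^2*(x₁ t) + (Real.exp (-(2 * F t)))*((x₁ t)^3)⁻¹) + 12*(x₂ t)^2*(v₂ t)^2 + 4*(x₂ t)^3*(-(deriv F t)*(v₂ t) + (ω t)^2*(x₂ t) + (Real.exp (-(2 * F t)))*((x₂ t)^3)⁻¹)) + I*(2*((v₁ t)^2*(x₂ t)^2 + (x₁ t)*(-(deriv F t)*(v₁ t) + (ω t)^2*(x₁ t) + (Real.exp (-(2 * F t)))*((x₁ t)^3)⁻¹)*(x₂ t)^2 + 2*((x₁ t)*(v₁ t))*((x₂ t)*(v₂ t))) + 2*((v₂ t)^2*(x₁ t)^2 + (x₂ t)*(-(deriv F t)*(v₂ t) + (ω t)^2*(x₂ t) + (Real.exp (-(2 * F t)))*((x₂ t)^3)⁻¹)*(x₁ t)^2 + 2*((x₂ t)*(v₂ t))*((x₁ t)*(v₁ t)))))) J t := by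
      refine (((((((hX1.pow 3).const_mul 4).mul hV1).add
        (((hX2.pow 3).const_mul 4).mul hV2)).neg).add
        (((((hX1.mul hV1).const_mul 2).mul (hX2.pow 2)).add
          (((hX2.mul hV2).const_mul 2).mul (hX1.pow 2))).const_mul I)).const_mul lam).congr_deriv ?_
      simp only [Pi.pow_apply, Pi.mul_apply]; push_cast; ring
    have hSder : HasDerivWithinAt
        (fun s => 2*Real.sqrt (lam * (-((x₁ s) ^ 4 + (x₂ s) ^ 4) + I * (x₁ s) ^ 2 * (x₂ s) ^ 2)))
        (2*(lam * (-(4*(x₁ t)^3*v₁ t + 4*(x₂ t)^3*v₂ t)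
            + I*(2*(x₁ t*v₁ t)*(x₂ t)^2 + 2*(x₂ t*v₂ t)*(x₁ t)^2)) /
          (2*Real.sqrt (lam * (-((x₁ t) ^ 4 + (x₂ t) ^ 4) + I * (x₁ t) ^ 2 * (x₂ t) ^ 2))))) J t :=
      (((hInner t ht).sqrt (ne_of_gt (hpos₁ t ht)))).const_mul 2
    have hNd : HasDerivWithinAt N
        (2*k₁*((v₁ t)^2 + (x₁ t)*(-(deriv F t)*(v₁ t) + (ω t)^2*(x₁ t) + (Real.exp (-(2 * F t)))*((x₁ t)^3)⁻¹)) + 2*k₂*((v₂ t)^2 + (x₂ t)*(-(deriv F t)*(v₂ t) + (ω t)^2*(x₂ t) + (Real.exp (-(2 * F t)))*((x₂ t)^3)⁻¹)) + (lam*(-(12*(x₁ t)^2*(v₁ t)^2 + 4*(x₁ t)^3*(-(deriv F t)*(v₁ t) + (ω t)^2*(x₁ t) + (Real.exp (-(2 * F t)))*((x₁ t)^3)⁻¹) + 12*(x₂ t)^2*(v₂ t)^2 + 4*(x₂ t)^3*(-(deriv F t)*(v₂ t) + (ω t)^2*(x₂ t) + (Real.exp (-(2 * F t)))*((x₂ t)^3)⁻¹))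 + I*(2*((v₁ t)^2*(x₂ t)^2 + (x₁ t)*(-(deriv F t)*(v₁ t) + (ω t)^2*(x₁ t) + (Real.exp (-(2 * F t)))*((x₁ t)^3)⁻¹)*(x₂ t)^2 + 2*((x₁ t)*(v₁ t))*((x₂ t)*(v₂ t))) + 2*((v₂ t)^2*(x₁ t)^2 + (x₂ t)*(-(deriv F t)*(v₂ t) + (ω t)^2*(x₂ t) + (Real.exp (-(2 * F t)))*((x₂ t)^3)⁻¹)*(x₁ t)^2 + 2*((x₂ t)*(v₂ t))*((x₁ t)*(v₁ t)))))/(Real.sqrt (lam * (-((x₁ t) ^ 4 + (x₂ t) ^ 4) + I * (x₁ t) ^ 2 * (x₂ t) ^ 2))) - lam^2*(-(4*(x₁ t)^3*(v₁ t) + 4*(x₂ t)^3*(v₂ t)) + I*(2*((x₁ t)*(v₁ t))*(x₂ t)^2 + 2*((x₂ t)*(v₂ t))*(x₁ t)^2))^2/(2*(Real.sqrt (lam * (-((x₁ t) ^ 4 + (x₂ t) ^ 4) + I * (x₁ t) ^ 2 * (x₂ t) ^ 2)))^3))) J t := by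
      rw [hN]
      exact ((((hX1.mul hV1).const_mul (2*k₁)).add ((hX2.mul hV2).const_mul (2*k₂))).add
        ((hRd.div hSder (mul_ne_zero two_ne_zero hSne)).const_mul 2)).congr_deriv
        (mp_nd (x₁ t) (v₁ t) (x₂ t) (v₂ t) _ _ _ _ lam k₁ k₂ I hSne ha hb)
    have hS2 : (Real.sqrt (lam * (-((x₁ t) ^ 4 + (x₂ t) ^ 4) + I * (x₁ t) ^ 2 * (x₂ t) ^ 2)))^2
        = lam * (-((x₁ t) ^ 4 + (x₂ t) ^ 4) + I * (x₁ t) ^ 2 * (x₂ t) ^ 2) :=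
      Real.sq_sqrt (hpos₁ t ht).le
    have hR0 : (-((x₁ t) ^ 4 + (x₂ t) ^ 4) + I * (x₁ t) ^ 2 * (x₂ t) ^ 2) ≠ 0 :=
      right_ne_zero_of_mul (ne_of_gt (hpos₁ t ht))
    have h3 : lam*(I^2 - 4) = k₁*k₂*I + k₁^2 + k₂^2 - 1 := by
      rw [hlam, div_mul_cancel₀ _ hI4']
    have h4 : (Real.sqrt (mpSupSq k₁ k₂ I lam x₁ x₂ t))^2
        = k₁*(x₁ t)^2 + k₂*(x₂ t)^2 + 2*(Real.sqrt (lam * (-((x₁ t) ^ 4 + (x₂ t) ^ 4) + I * (x₁ t) ^ 2 * (x₂ t) ^ 2))) := by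
      rw [Real.sq_sqrt (hpos₂ t ht).le]; rfl
    have hW' : (x₁ t*v₂ t - x₂ t*v₁ t)^2*(x₁ t)^2*(x₂ t)^2
        = (Real.exp (-(2 * F t)))*(-((x₁ t) ^ 4 + (x₂ t) ^ 4) + I * (x₁ t) ^ 2 * (x₂ t) ^ 2) := by
      have hIt := hI t ht
      have hexp : Real.exp (-(2 * F t)) * Real.exp (2 * F t) = 1 := by
        rw [← Real.exp_add]; simp
      field_simp at hIt
      linear_combination Real.exp (-(2 * F t)) * hIt
        - (x₁ t*v₂ t - x₂ t*v₁ t)^2*(x₁ t)^2*(x₂ t)^2 * hexp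
    have hUDval := mp_ud (x₁ t) (v₁ t) (x₂ t) (v₂ t) (Real.sqrt (lam * (-((x₁ t) ^ 4 + (x₂ t) ^ 4) + I * (x₁ t) ^ 2 * (x₂ t) ^ 2)))
      (Real.exp (-(2 * F t))) (deriv F t) (ω t) lam k₁ k₂ I hSne
    have hUDDval := mp_udd (x₁ t) (v₁ t) (x₂ t) (v₂ t) (Real.sqrt (lam * (-((x₁ t) ^ 4 + (x₂ t) ^ 4) + I * (x₁ t) ^ 2 * (x₂ t) ^ 2)))
      (Real.exp (-(2 * F t))) (deriv F t) (ω t) lam k₁ k₂ I hSne ha hb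
    have key := mp_key (x₁ t) (v₁ t) (x₂ t) (v₂ t) (Real.sqrt (lam * (-((x₁ t) ^ 4 + (x₂ t) ^ 4) + I * (x₁ t) ^ 2 * (x₂ t) ^ 2)))
      (Real.sqrt (mpSupSq k₁ k₂ I lam x₁ x₂ t)) (Real.exp (-(2 * F t))) (deriv F t) (ω t)
      lam k₁ k₂ I (N t) _ hS2 hW' h3 h4 hUDval hUDDval hI4' hR0 hSne ha hb
    have hDen : HasDerivWithinAt (fun s => 2*Real.sqrt (mpSupSq k₁ k₂ I lam x₁ x₂ s))
        (2*(N t/(2*Real.sqrt (mpSupSq k₁ k₂ I lam x₁ x₂ t)))) J t :=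
      ((hu t ht).sqrt (ne_of_gt (hpos₂ t ht))).const_mul 2
    have hdiv := hNd.div hDen (mul_ne_zero two_ne_zero hqne)
    refine hdiv.congr_deriv ?_
    exact (mp_final _ (N t) _ (Real.exp (-(2 * F t))) (deriv F t) (ω t) hqne key).symm
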